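/- Let S = ⟨qm₁,…,qm_d, pn₁,…,pn_k⟩ be a specific gluing of S₁ and S₂. If ord_S(u + qw) > ord_S(u) + ord_S(qw) for some u∈S and w∈S₁, then u = qz₁ + pz₂ for some z₁∈S₁ and z₂∈S₂ such that ord_S(u) = ord_{S₁}(z₁) + ord_{S₂}(z₂) and ord_{S₁}(z₁ + w) > ord_{S₁}(z₁) + ord_{S₁}(w). -/

import Mathlib

open scoped Pointwise

/-- `S ⊆ ℕ` is a numerical semigroup: it contains `0`, is closed under
addition, and has finite complement in `ℕ`. -/
def IsNumSgp (S : Set ℕ) : Prop :=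
  (0 : ℕ) ∈ S ∧ (∀ a ∈ S, ∀ b ∈ S, a + b ∈ S) ∧ {x : ℕ | x ∉ S}.Finite

/-- `nM S t` is the `t`-fold sumset of the maximal ideal `M = S \ {0}`,
with the convention `nM S 0 = S`. -/
def nM (S : Set ℕ) : ℕ → Set ℕ
  | 0 => S
  | t + 1 => (S \ {0}) + nM S t

/-- the order of `s` with respect to `S` : the largest `t` with `s ∈ tM`. -/
noncomputable def ordS (S : Set ℕ) (s : ℕ) : ℕ := sSup {t : ℕ | s ∈ nM S t}

/-- the multiplicity of `S` : its least nonzero element. -/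
noncomputable def mult (S : Set ℕ) : ℕ := sInf {x : ℕ | x ∈ S ∧ x ≠ 0}

/-- the Apéry set of `S` with respect to `x` : elements `s ∈ S` with `s - x ∉ S`. -/
def Ap (S : Set ℕ) (x : ℕ) : Set ℕ := {s : ℕ | s ∈ S ∧ ¬ ∃ t ∈ S, s = t + x}

/-- membership of an integer in (the image in `ℤ` of) `S`. -/
def zmem (S : Set ℕ) (z : ℤ) : Prop := ∃ t ∈ S, (t : ℤ) = z

/-- the Frobenius number of `S` : the largest integer not in `S`. -/
noncomputable def Frob (S : Set ℕ) : ℤ := sSup {z : ℤ | ¬ zmem S z}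

/-- `S` is symmetric: for every integer `z`, `z ∈ S` iff `F(S) - z ∉ S`. -/
def IsSymmetric (S : Set ℕ) : Prop := ∀ z : ℤ, zmem S z ↔ ¬ zmem S (Frob S - z)

/-- the set of maximal elements of `Ap S x` with respect to the order
`u ⪯ v` iff `v = u + z` for some `z ∈ S`. -/
def MaxAp (S : Set ℕ) (x : ℕ) : Set ℕ :=
  {w : ℕ | w ∈ Ap S x ∧ ∀ y ∈ Ap S x, (∃ z ∈ S, y = w + z) → y = w}

/-- the set of maximal elements of `Ap S x` with respect to the order
`u ⪯_M v` iff `v = u + z` for some `z ∈ S` with `ord(v) = ord(u) + ord(z)`. -/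
def MaxMAp (S : Set ℕ) (x : ℕ) : Set ℕ :=
  {w : ℕ | w ∈ Ap S x ∧ ∀ y ∈ Ap S x,
    (∃ z ∈ S, y = w + z ∧ ordS S y = ordS S w + ordS S z) → y = w}

/-- `S` is M-pure with respect to `x` : all maximal elements of `Ap S x`
under `⪯_M` have the same order. -/
def MPureWrt (S : Set ℕ) (x : ℕ) : Prop :=
  ∀ w ∈ MaxMAp S x, ∀ w' ∈ MaxMAp S x, ordS S w = ordS S w'

/-- `S` is M-pure : it is M-pure with respect to its multiplicity. -/
def MPure (S : Set ℕ) : Prop := MPureWrt S (mult S)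

/-- `β_i(x)` : the number of elements of `Ap S x` of order `i`. -/
noncomputable def betaS (S : Set ℕ) (x i : ℕ) : ℕ := {w ∈ Ap S x | ordS S w = i}.ncard

/-- `d(x)` : the maximal order of an element of `Ap S x`. -/
noncomputable def dS (S : Set ℕ) (x : ℕ) : ℕ := sSup (ordS S '' Ap S x)

/-- the reduction number of `S` : the least `r` with `(r+1)M = m(S) + rM`. -/
noncomputable def redNum (S : Set ℕ) : ℕ :=
  sInf {r : ℕ | nM S (r + 1) = (fun y => mult S + y) '' nM S r}

/-- `l_x(S) = max { ord(s+x) - ord(x) - ord(s) : s ∈ S, ord(s) ≤ r }`. -/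
noncomputable def lS (S : Set ℕ) (x : ℕ) : ℕ :=
  sSup {t : ℕ | ∃ s ∈ S, ordS S s ≤ redNum S ∧ t = ordS S (s + x) - ordS S x - ordS S s}

/-- the Hilbert function of `S`. -/
noncomputable def HilbS (S : Set ℕ) (t : ℕ) : ℕ := (nM S t \ nM S (t + 1)).ncard

/-- The data of a gluing `S = ⟨q m₁, …, q m_d, p n₁, …, p n_k⟩` of two numerical
semigroups `S₁ = ⟨m₁, …, m_d⟩` and `S₂ = ⟨n₁, …, n_k⟩`, minimally generated by
`m₁ < ⋯ < m_d` and `n₁ < ⋯ < n_k`, where `p ∈ S₁ \ {m₁, …, m_d}`,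
`q ∈ S₂ \ {n₁, …, n_k}` and `gcd(p, q) = 1`. -/
structure Gluing where
  d : ℕ
  k : ℕ
  hd : 0 < d
  hk : 0 < k
  m : Fin d → ℕ
  n : Fin k → ℕ
  p : ℕ
  q : ℕ
  hm : StrictMono m
  hn : StrictMono n
  hmin₁ : ∀ i, m i ∉ AddSubmonoid.closure (Set.range m \ {m i})
  hmin₂ : ∀ j, n j ∉ AddSubmonoid.closure (Set.range n \ {n j})
  hnum₁ : IsNumSgp (AddSubmonoid.closure (Set.range m) : Set ℕ)
  hnum₂ : IsNumSgp (AddSubmonoid.closure (Set.range n) : Set ℕ)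
  hp : p ∈ AddSubmonoid.closure (Set.range m)
  hq : q ∈ AddSubmonoid.closure (Set.range n)
  hpm : p ∉ Set.range m
  hqn : q ∉ Set.range n
  hpq : Nat.gcd p q = 1

/-- the numerical semigroup `S₁ = ⟨m₁, …, m_d⟩`. -/
def Gluing.S₁ (G : Gluing) : Set ℕ := (AddSubmonoid.closure (Set.range G.m) : Set ℕ)

/-- the numerical semigroup `S₂ = ⟨n₁, …, n_k⟩`. -/
def Gluing.S₂ (G : Gluing) : Set ℕ := (AddSubmonoid.closure (Set.range G.n) : Set ℕ)

/-- the glued numerical semigroup `S = ⟨q m₁, …, q m_d, p n₁, …, p n_k⟩`. -/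
def Gluing.S (G : Gluing) : Set ℕ :=
  (AddSubmonoid.closure
    ((fun x => G.q * x) '' Set.range G.m ∪ (fun x => G.p * x) '' Set.range G.n) : Set ℕ)

/-- the smallest generator `m₁` of `S₁`. -/
def Gluing.m₁ (G : Gluing) : ℕ := G.m ⟨0, G.hd⟩

/-- the smallest generator `n₁` of `S₂`. -/
def Gluing.n₁ (G : Gluing) : ℕ := G.n ⟨0, G.hk⟩

/-- the gluing is specific if `ord_{S₂}(q) + l_q(S₂) ≤ ord_{S₁}(p)`. -/
def Gluing.Specific (G : Gluing) : Prop := ordS G.S₂ G.q + lS G.S₂ G.q ≤ ordS G.S₁ G.p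

/-- the gluing is nice if `q = a n₁` for some `1 < a ≤ ord_{S₁}(p)`. -/
def Gluing.Nice (G : Gluing) : Prop := ∃ a : ℕ, 1 < a ∧ a ≤ ordS G.S₁ G.p ∧ G.q = a * G.n₁

namespace Aux

variable {S : Set ℕ}

lemma mem_nM_succ {x t : ℕ} :
    x ∈ nM S (t + 1) ↔ ∃ a ∈ S, a ≠ 0 ∧ ∃ b ∈ nM S t, x = a + b := by
  show x ∈ (S \ {0}) + nM S t ↔ _
  rw [Set.mem_add]
  constructor
  · rintro ⟨a, ⟨ha, ha0⟩, b, hb, rfl⟩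
    exact ⟨a, ha, by simpa using ha0, b, hb, rfl⟩
  · rintro ⟨a, ha, ha0, b, hb, rfl⟩
    exact ⟨a, ⟨ha, by simpa using ha0⟩, b, hb, rfl⟩

variable (hadd : ∀ a ∈ S, ∀ b ∈ S, a + b ∈ S)

include hadd in
lemma nM_subset : ∀ t, nM S t ⊆ S := by
  intro t
  induction t with
  | zero => exact fun x hx => hx
  | succ t ih =>
    intro x hx
    rcases mem_nM_succ.1 hx with ⟨a, ha, _, b, hb, rfl⟩
    exact hadd a ha b (ih hb)

include hadd in
lemma nM_succ_subset : ∀ t, nM S (t + 1) ⊆ nM S t := by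
  intro t
  induction t with
  | zero => exact nM_subset hadd 1
  | succ t ih =>
    intro x hx
    rcases mem_nM_succ.1 hx with ⟨a, ha, ha0, b, hb, rfl⟩
    exact mem_nM_succ.2 ⟨a, ha, ha0, b, ih hb, rfl⟩

include hadd in
lemma nM_anti {t t' : ℕ} (h : t' ≤ t) : nM S t ⊆ nM S t' := by
  induction h with
  | refl => exact fun x hx => hx
  | step h ih => exact fun x hx => ih (nM_succ_subset hadd _ hx)

lemma le_of_mem_nM {x t : ℕ} (h : x ∈ nM S t) : t ≤ x := by
  induction t generalizing x with
  | zero => omega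
  | succ t ih =>
    rcases mem_nM_succ.1 h with ⟨a, _, ha0, b, hb, rfl⟩
    have := ih hb
    omega

include hadd in
lemma S_add_nM {a x t : ℕ} (ha : a ∈ S) (hx : x ∈ nM S t) : a + x ∈ nM S t := by
  induction t generalizing x with
  | zero => exact hadd a ha x hx
  | succ t ih =>
    rcases mem_nM_succ.1 hx with ⟨c, hc, hc0, d, hd, rfl⟩
    exact mem_nM_succ.2 ⟨c, hc, hc0, a + d, ih hd, by ring⟩

include hadd in
lemma add_mem_nM {a b t t' : ℕ} (ha : a ∈ nM S t) (hb : b ∈ nM S t') :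
    a + b ∈ nM S (t + t') := by
  induction t generalizing a with
  | zero => simpa [Nat.add_comm] using S_add_nM hadd ha hb
  | succ t ih =>
    rcases mem_nM_succ.1 ha with ⟨c, hc, hc0, d, hd, rfl⟩
    have : t + 1 + t' = (t + t') + 1 := by omega
    rw [this]
    exact mem_nM_succ.2 ⟨c, hc, hc0, d + b, ih hd, by ring⟩

lemma bddAbove_ordset (x : ℕ) : BddAbove {t : ℕ | x ∈ nM S t} :=
  ⟨x, fun t ht => le_of_mem_nM ht⟩

lemma mem_nM_ordS {x : ℕ} (hx : x ∈ S) : x ∈ nM S (ordS S x) :=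
  Nat.sSup_mem (s := {t : ℕ | x ∈ nM S t}) ⟨0, show x ∈ nM S 0 from hx⟩ (bddAbove_ordset x)

lemma le_ordS {x t : ℕ} (h : x ∈ nM S t) : t ≤ ordS S x :=
  le_csSup (bddAbove_ordset x) h

include hadd in
lemma ordS_superadd {a b : ℕ} (ha : a ∈ S) (hb : b ∈ S) :
    ordS S a + ordS S b ≤ ordS S (a + b) :=
  le_ordS (add_mem_nM hadd (mem_nM_ordS ha) (mem_nM_ordS hb))

lemma ordS_pos (h0 : (0:ℕ) ∈ S) {a : ℕ} (ha : a ∈ S) (hne : a ≠ 0) :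
    1 ≤ ordS S a :=
  le_ordS (mem_nM_succ.2 ⟨a, ha, hne, 0, h0, by omega⟩)

include hadd in
lemma mul_mem_of_mem {b : ℕ} (hb : b ∈ S) (h0 : (0:ℕ) ∈ S) (k : ℕ) : k * b ∈ S := by
  induction k with
  | zero => simpa using h0
  | succ k ih =>
    have : (k+1) * b = k * b + b := by ring
    rw [this]; exact hadd _ ih _ hb

include hadd in
lemma ordS_add_nsmul {a b : ℕ} (h0 : (0:ℕ) ∈ S) (ha : a ∈ S) (hb : b ∈ S) (k : ℕ) :
    ordS S a + k * ordS S b ≤ ordS S (a + k * b) := by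
  induction k with
  | zero => simp
  | succ k ih =>
    have hmem : a + k * b ∈ S := hadd a ha _ (mul_mem_of_mem hadd hb h0 k)
    have h1 : ordS S (a + k * b) + ordS S b ≤ ordS S (a + k * b + b) :=
      ordS_superadd hadd hmem hb
    have h2 : a + (k+1) * b = a + k * b + b := by ring
    rw [h2, Nat.succ_mul]
    omega


lemma mem_nM_iff_list {x t : ℕ} :
    x ∈ nM S t ↔ ∃ l : List ℕ, l.length = t ∧ (∀ a ∈ l, a ∈ S ∧ a ≠ 0) ∧
      ∃ y ∈ S, x = l.sum + y := by
  induction t generalizing x with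
  | zero =>
    constructor
    · intro hx; exact ⟨[], rfl, by simp, x, hx, by simp⟩
    · rintro ⟨l, hl, -, y, hy, rfl⟩
      rw [List.length_eq_zero_iff] at hl
      subst hl
      simpa [nM] using hy
  | succ t ih =>
    constructor
    · intro hx
      rcases mem_nM_succ.1 hx with ⟨a, ha, ha0, b, hb, rfl⟩
      rcases ih.1 hb with ⟨l, hl, hmem, y, hy, rfl⟩
      exact ⟨a :: l, by simp [hl], by
        intro c hc
        rcases List.mem_cons.1 hc with h | h
        · exact h ▸ ⟨ha, ha0⟩
        · exact hmem c h, y, hy, by simp [List.sum_cons]; ring⟩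
    · rintro ⟨l, hl, hmem, y, hy, rfl⟩
      rcases l with _ | ⟨a, l⟩
      · simp at hl
      · simp at hl
        refine mem_nM_succ.2 ⟨a, (hmem a (by simp)).1, (hmem a (by simp)).2, l.sum + y, ?_, by simp [List.sum_cons]; ring⟩
        exact ih.2 ⟨l, hl, fun c hc => hmem c (by simp [hc]), y, hy, rfl⟩


lemma sum_ge_length_mul {e : ℕ} : ∀ (l : List ℕ), (∀ a ∈ l, e ≤ a) → l.length * e ≤ l.sum := by
  intro l
  induction l with
  | nil => simp
  | cons a l ih =>
    intro h
    have h1 := h a (by simp)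
    have h2 := ih (fun c hc => h c (by simp [hc]))
    simp only [List.length_cons, List.sum_cons, Nat.succ_mul]
    omega

include hadd in
lemma reduction (h0 : (0:ℕ) ∈ S) {e : ℕ} (he : e ∈ S) (he0 : e ≠ 0)
    (hmin : ∀ z ∈ S, z ≠ 0 → e ≤ z) {t : ℕ} (ht : e ≤ t) :
    nM S (t + 1) = (fun y => e + y) '' nM S t := by
  ext x
  constructor
  swap
  · rintro ⟨y, hy, rfl⟩
    exact mem_nM_succ.2 ⟨e, he, he0, y, hy, rfl⟩
  intro hx
  rcases mem_nM_iff_list.1 hx with ⟨l, hl, hmem, y, hy, hxs⟩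
  have hepos : 0 < e := Nat.pos_of_ne_zero he0
  obtain ⟨i, hi, j, hj, hij, hfe⟩ :
      ∃ i ∈ Finset.range (e+1), ∃ j ∈ Finset.range (e+1), i ≠ j ∧
        (l.take i).sum % e = (l.take j).sum % e := by
    have := Finset.exists_ne_map_eq_of_card_lt_of_maps_to
      (s := Finset.range (e+1)) (t := Finset.range e)
      (by simp) (f := fun i => (l.take i).sum % e)
      (fun i _ => Finset.mem_range.2 (Nat.mod_lt _ hepos))
    rcases this with ⟨i, hi, j, hj, hij, hfe⟩
    exact ⟨i, hi, j, hj, hij, hfe⟩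
  wlog hlt : i < j generalizing i j
  · exact this j hj i hi hij.symm hfe.symm (by omega)
  simp only [Finset.mem_range] at hi hj
  have hjlen : j ≤ l.length := by omega
  set d := j - i with hd
  have hdpos : 0 < d := by omega
  have hde : (d - 1) * e + e = d * e := by
    have h1 : d - 1 + 1 = d := by omega
    rw [← add_one_mul, h1]
  set mid : List ℕ := (l.drop i).take d with hmid
  have htj : l.take j = l.take i ++ mid := by
    rw [hmid, ← List.take_add]
    congr 1
    omega
  have hrest : l = l.take j ++ l.drop j := (List.take_append_drop j l).symm
  have hmidlen : mid.length = d := by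
    rw [hmid]
    simp
    omega
  have hmidmem : ∀ a ∈ mid, a ∈ S ∧ a ≠ 0 := by
    intro a ha
    exact hmem a (List.mem_of_mem_drop (List.mem_of_mem_take ha))
  have hmide : ∀ a ∈ mid, e ≤ a := fun a ha =>
    hmin a (hmidmem a ha).1 (hmidmem a ha).2
  set B := mid.sum with hB
  have hmidsum : d * e ≤ B := by
    have := sum_ge_length_mul mid hmide
    rwa [hmidlen] at this
  have heB : e ≤ B := by omega
  have hdvd : e ∣ B := by
    have h1 : (l.take j).sum = (l.take i).sum + B := by
      rw [htj, List.sum_append]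
    have h2 : (l.take i).sum ≡ (l.take j).sum [MOD e] := hfe
    rw [Nat.modEq_iff_dvd' (by omega)] at h2
    rwa [h1, Nat.add_sub_cancel_left] at h2
  have key : ∃ mid' : List ℕ, mid'.sum = B - e ∧ d ≤ mid'.length + 1 ∧
      mid'.length ≤ d ∧ (∀ a ∈ mid', a ∈ S ∧ a ≠ 0) := by
    by_cases hcase : B = d * e
    · refine ⟨List.replicate (d-1) e, ?_, ?_, ?_, ?_⟩
      · rw [List.sum_replicate, smul_eq_mul]
        omega
      · rw [List.length_replicate]
        omega
      · rw [List.length_replicate]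
        omega
      · intro a ha
        rw [List.eq_of_mem_replicate ha]
        exact ⟨he, he0⟩
    · have hBgt : d * e < B := lt_of_le_of_ne hmidsum (fun h => hcase h.symm)
      have hdvd2 : e ∣ B - d * e := Nat.dvd_sub hdvd ⟨d, by ring⟩
      refine ⟨List.replicate (d-1) e ++ [B - d * e], ?_, ?_, ?_, ?_⟩
      · rw [List.sum_append, List.sum_replicate, smul_eq_mul]
        simp only [List.sum_cons, List.sum_nil]
        omega
      · simp only [List.length_append, List.length_replicate, List.length_singleton]
        omega
      · rw [List.length_append, List.length_replicate]
        simp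
        omega
      · intro a ha
        simp only [List.mem_append, List.mem_replicate, List.mem_singleton] at ha
        rcases ha with ⟨-, rfl⟩ | rfl
        · exact ⟨he, he0⟩
        · obtain ⟨k, hk⟩ := hdvd2
          rcases Nat.eq_zero_or_pos k with rfl | hkpos
          · simp at hk
            omega
          constructor
          · rw [hk, Nat.mul_comm]
            exact mul_mem_of_mem hadd he h0 k
          · omega
  obtain ⟨mid', hsum', hlen1', hlen2', hmem'⟩ := key
  set l' : List ℕ := l.take i ++ mid' ++ l.drop j with hl'
  have hl'mem : ∀ a ∈ l', a ∈ S ∧ a ≠ 0 := by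
    intro a ha
    simp only [hl', List.mem_append] at ha
    rcases ha with (ha | ha) | ha
    · exact hmem a (List.mem_of_mem_take ha)
    · exact hmem' a ha
    · exact hmem a (List.mem_of_mem_drop ha)
  have hl'sum : l'.sum + e = l.sum := by
    have h1 : l.sum = (l.take i).sum + B + (l.drop j).sum := by
      conv_lhs => rw [hrest]
      rw [List.sum_append, htj, List.sum_append]
    simp only [hl', List.sum_append]
    omega
  have hti : (l.take i).length = i := by
    rw [List.length_take]
    omega
  have hdj : (l.drop j).length = l.length - j := by
    rw [List.length_drop]
  have hl'len1 : l'.length ≤ t + 1 := by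
    simp only [hl', List.length_append, hti, hdj]
    omega
  have hl'len2 : t ≤ l'.length := by
    simp only [hl', List.length_append, hti, hdj]
    omega
  have hxmem : l'.sum + y ∈ nM S l'.length :=
    mem_nM_iff_list.2 ⟨l', rfl, hl'mem, y, hy, rfl⟩
  have hxmem2 : l'.sum + y ∈ nM S t := nM_anti hadd hl'len2 hxmem
  refine ⟨l'.sum + y, hxmem2, ?_⟩
  show e + (l'.sum + y) = x
  omega


lemma exists_N (hfin : {x : ℕ | x ∉ S}.Finite) : ∃ N : ℕ, ∀ x, N ≤ x → x ∈ S := by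
  obtain ⟨N, hN⟩ := hfin.bddAbove
  refine ⟨N + 1, fun x hx => ?_⟩
  by_contra h
  have := hN (show x ∈ {x : ℕ | x ∉ S} from h)
  omega

lemma mult_mem (hfin : {x : ℕ | x ∉ S}.Finite) : mult S ∈ S ∧ mult S ≠ 0 := by
  obtain ⟨N, hN⟩ := exists_N hfin
  have hmem : (N + 1) ∈ {x : ℕ | x ∈ S ∧ x ≠ 0} := ⟨hN _ (by omega), by omega⟩
  exact Nat.sInf_mem ⟨_, hmem⟩

lemma mult_min {z : ℕ} (hz : z ∈ S) (hz0 : z ≠ 0) : mult S ≤ z :=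
  Nat.sInf_le ⟨hz, hz0⟩

lemma image_translate_add (e : ℕ) (A B : Set ℕ) :
    (fun y => e + y) '' (A + B) = A + ((fun y => e + y) '' B) := by
  ext x
  constructor
  · rintro ⟨z, hz, rfl⟩
    rcases Set.mem_add.1 hz with ⟨a, ha, b, hb, rfl⟩
    exact Set.mem_add.2 ⟨a, ha, e + b, ⟨b, hb, rfl⟩, by ring⟩
  · intro hx
    rcases Set.mem_add.1 hx with ⟨a, ha, c, ⟨b, hb, rfl⟩, rfl⟩
    exact ⟨a + b, Set.mem_add.2 ⟨a, ha, b, hb, rfl⟩, by ring⟩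

include hadd in
lemma redNum_step (h0 : (0:ℕ) ∈ S) (hfin : {x : ℕ | x ∉ S}.Finite) :
    ∀ t, redNum S ≤ t → nM S (t + 1) = (fun y => mult S + y) '' nM S t := by
  obtain ⟨hemem, he0⟩ := mult_mem hfin
  have hne : {r : ℕ | nM S (r + 1) = (fun y => mult S + y) '' nM S r}.Nonempty :=
    ⟨mult S, reduction hadd h0 hemem he0 (fun z hz hz0 => mult_min hz hz0) le_rfl⟩
  have hbase : nM S (redNum S + 1) = (fun y => mult S + y) '' nM S (redNum S) :=
    Nat.sInf_mem hne
  intro t ht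
  induction t, ht using Nat.le_induction with
  | base => exact hbase
  | succ t ht ih =>
    calc nM S (t + 1 + 1) = (S \ {0}) + nM S (t + 1) := rfl
      _ = (S \ {0}) + ((fun y => mult S + y) '' nM S t) := by rw [ih]
      _ = (fun y => mult S + y) '' ((S \ {0}) + nM S t) := (image_translate_add _ _ _).symm
      _ = (fun y => mult S + y) '' nM S (t + 1) := rfl

include hadd in
lemma mem_nM_of_big (h0 : (0:ℕ) ∈ S) {N : ℕ} (hN : ∀ x, N ≤ x → x ∈ S)
    (hfin : {x : ℕ | x ∉ S}.Finite) :
    ∀ t x, N + t * mult S ≤ x → x ∈ nM S t := by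
  obtain ⟨hemem, he0⟩ := mult_mem hfin
  intro t
  induction t with
  | zero => exact fun x hx => hN x (by omega)
  | succ t ih =>
    intro x hx
    have he1 : 1 ≤ mult S := by omega
    have hx1 : mult S ≤ x := by
      have : (t+1) * mult S ≥ mult S := Nat.le_mul_of_pos_left _ (by omega)
      omega
    refine mem_nM_succ.2 ⟨mult S, hemem, he0, x - mult S, ih _ ?_, by omega⟩
    have : (t+1) * mult S = t * mult S + mult S := by ring
    omega

include hadd in
lemma small_ord_bounded (h0 : (0:ℕ) ∈ S) {N : ℕ} (hN : ∀ x, N ≤ x → x ∈ S)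
    (hfin : {x : ℕ | x ∉ S}.Finite) {s : ℕ} (hs : ordS S s ≤ redNum S) :
    s ≤ N + (redNum S + 1) * mult S := by
  by_contra h
  have : s ∈ nM S (redNum S + 1) :=
    mem_nM_of_big hadd h0 hN hfin _ s (by omega)
  have := le_ordS this
  omega

include hadd in
lemma lS_le (h0 : (0:ℕ) ∈ S) (hfin : {x : ℕ | x ∉ S}.Finite) {q b : ℕ}
    (hq : q ∈ S) (hb : b ∈ S) (hbo : ordS S b ≤ redNum S) :
    ordS S (b + q) ≤ ordS S b + ordS S q + lS S q := by
  obtain ⟨N, hN⟩ := exists_N hfin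
  have hbdd : BddAbove {t : ℕ | ∃ s ∈ S, ordS S s ≤ redNum S ∧
      t = ordS S (s + q) - ordS S q - ordS S s} := by
    refine ⟨N + (redNum S + 1) * mult S + q, ?_⟩
    rintro t ⟨s, hs, hso, rfl⟩
    have h1 : s ≤ N + (redNum S + 1) * mult S :=
      small_ord_bounded hadd h0 hN hfin hso
    have h2 : ordS S (s + q) ≤ s + q :=
      le_of_mem_nM (mem_nM_ordS (hadd s hs q hq))
    omega
  have hmem : ordS S (b + q) - ordS S q - ordS S b ∈
      {t : ℕ | ∃ s ∈ S, ordS S s ≤ redNum S ∧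
        t = ordS S (s + q) - ordS S q - ordS S s} := ⟨b, hb, hbo, rfl⟩
  have := le_csSup hbdd hmem
  have hls : ordS S (b + q) - ordS S q - ordS S b ≤ lS S q := this
  omega

include hadd in
lemma ord_add_le (h0 : (0:ℕ) ∈ S) (hfin : {x : ℕ | x ∉ S}.Finite) {q : ℕ}
    (hq : q ∈ S) : ∀ b, b ∈ S → ordS S (b + q) ≤ ordS S b + ordS S q + lS S q := by
  intro b
  induction b using Nat.strong_induction_on with
  | _ b ih =>
  intro hb
  by_cases hcase : ordS S b ≤ redNum S
  · exact lS_le hadd h0 hfin hq hb hcase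
  push_neg at hcase
  obtain ⟨hemem, he0⟩ := mult_mem hfin
  have hb1 : b ∈ nM S (ordS S b) := mem_nM_ordS hb
  have hstep : nM S (ordS S b - 1 + 1) = (fun y => mult S + y) '' nM S (ordS S b - 1) :=
    redNum_step hadd h0 hfin _ (by omega)
  rw [show ordS S b - 1 + 1 = ordS S b by omega] at hstep
  rw [hstep] at hb1
  obtain ⟨b', hb'mem, hb'eq⟩ := hb1
  have hb'eq' : mult S + b' = b := hb'eq
  have hb'S : b' ∈ S := nM_subset hadd _ hb'mem
  have hb'lt : b' < b := by omega
  have hb'ord1 : ordS S b - 1 ≤ ordS S b' := le_ordS hb'mem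
  have hb'ord2 : ordS S b' + 1 ≤ ordS S b := by
    have h1 := ordS_superadd hadd hemem hb'S
    have h2 := ordS_pos h0 hemem he0
    rw [hb'eq'] at h1
    omega
  -- now reduce b + q
  have hbq : b + q ∈ S := hadd b hb q hq
  have hbqord : redNum S + 1 ≤ ordS S (b + q) := by
    have := ordS_superadd hadd hb hq
    omega
  have hbq1 : b + q ∈ nM S (ordS S (b + q)) := mem_nM_ordS hbq
  have hstep2 : nM S (ordS S (b+q) - 1 + 1) =
      (fun y => mult S + y) '' nM S (ordS S (b+q) - 1) :=
    redNum_step hadd h0 hfin _ (by omega)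
  rw [show ordS S (b+q) - 1 + 1 = ordS S (b+q) by omega] at hstep2
  rw [hstep2] at hbq1
  obtain ⟨c, hcmem, hceq⟩ := hbq1
  have hceq' : mult S + c = b + q := hceq
  have hc : c = b' + q := by omega
  subst hc
  have h3 : ordS S (b + q) - 1 ≤ ordS S (b' + q) := le_ordS hcmem
  have h4 := ih b' hb'lt hb'S
  omega

include hadd in
lemma ord_add_mul_le (h0 : (0:ℕ) ∈ S) (hfin : {x : ℕ | x ∉ S}.Finite) {q : ℕ}
    (hq : q ∈ S) (b : ℕ) (hb : b ∈ S) (k : ℕ) :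
    ordS S (b + q * k) ≤ ordS S b + k * (ordS S q + lS S q) := by
  induction k with
  | zero => simp
  | succ k ih =>
    have h1 : b + q * k ∈ S := hadd b hb _ (by
      have := mul_mem_of_mem hadd hq h0 k
      rwa [Nat.mul_comm] at this)
    have h2 := ord_add_le hadd h0 hfin hq _ h1
    have h3 : b + q * (k + 1) = (b + q * k) + q := by ring
    rw [h3, Nat.succ_mul]
    omega

end Aux

namespace Aux2
variable (G : Gluing)

lemma h0₁ : (0:ℕ) ∈ G.S₁ := AddSubmonoid.zero_mem _
lemma h0₂ : (0:ℕ) ∈ G.S₂ := AddSubmonoid.zero_mem _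
lemma h0S : (0:ℕ) ∈ G.S := AddSubmonoid.zero_mem _
lemma hadd₁ : ∀ a ∈ G.S₁, ∀ b ∈ G.S₁, a + b ∈ G.S₁ := fun a ha b hb =>
  AddSubmonoid.add_mem _ ha hb
lemma hadd₂ : ∀ a ∈ G.S₂, ∀ b ∈ G.S₂, a + b ∈ G.S₂ := fun a ha b hb =>
  AddSubmonoid.add_mem _ ha hb
lemma haddS : ∀ a ∈ G.S, ∀ b ∈ G.S, a + b ∈ G.S := fun a ha b hb =>
  AddSubmonoid.add_mem _ ha hb
lemma hfin₂ : {x : ℕ | x ∉ G.S₂}.Finite := G.hnum₂.2.2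

lemma hm_pos : ∀ i, 0 < G.m i := by
  intro i
  by_contra h
  have h0 : G.m i = 0 := by omega
  exact G.hmin₁ i (h0 ▸ AddSubmonoid.zero_mem _)

lemma hn_pos : ∀ j, 0 < G.n j := by
  intro j
  by_contra h
  have h0 : G.n j = 0 := by omega
  exact G.hmin₂ j (h0 ▸ AddSubmonoid.zero_mem _)

lemma gen_le {ι : Type*} {f : ι → ℕ} {x : ℕ}
    (hx : x ∈ AddSubmonoid.closure (Set.range f)) (hne : x ≠ 0) :
    ∃ i, f i ≤ x ∧ f i ≠ 0 := by
  induction hx using AddSubmonoid.closure_induction with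
  | mem y hy =>
    obtain ⟨i, rfl⟩ := hy
    exact ⟨i, le_rfl, hne⟩
  | zero => omega
  | add a b ha hb iha ihb =>
    rcases Nat.eq_zero_or_pos a with rfl | hapos
    · obtain ⟨i, h1, h2⟩ := ihb (by omega)
      exact ⟨i, by omega, h2⟩
    · obtain ⟨i, h1, h2⟩ := iha (by omega)
      exact ⟨i, by omega, h2⟩

lemma hq_pos : 0 < G.q := by
  by_contra h
  have hq0 : G.q = 0 := by omega
  have hp1 : G.p = 1 := by have := G.hpq; rw [hq0] at this; simpa using this
  obtain ⟨i, h1, h2⟩ := gen_le (f := G.m) G.hp (by omega)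
  have : G.m i = 1 := by have := hm_pos G i; omega
  exact G.hpm ⟨i, by omega⟩

lemma hp_pos : 0 < G.p := by
  by_contra h
  have hp0 : G.p = 0 := by omega
  have hq1 : G.q = 1 := by have := G.hpq; rw [hp0] at this; simpa using this
  obtain ⟨j, h1, h2⟩ := gen_le (f := G.n) G.hq (by omega)
  have : G.n j = 1 := by have := hn_pos G j; omega
  exact G.hqn ⟨j, by omega⟩

lemma q_mul_mem {a : ℕ} (ha : a ∈ G.S₁) : G.q * a ∈ G.S := by
  induction ha using AddSubmonoid.closure_induction with
  | mem y hy =>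
    exact AddSubmonoid.subset_closure (Set.mem_union_left _ ⟨y, hy, rfl⟩)
  | zero => simpa using h0S G
  | add a b _ _ iha ihb =>
    have : G.q * (a + b) = G.q * a + G.q * b := by ring
    rw [this]
    exact AddSubmonoid.add_mem _ iha ihb

lemma p_mul_mem {b : ℕ} (hb : b ∈ G.S₂) : G.p * b ∈ G.S := by
  induction hb using AddSubmonoid.closure_induction with
  | mem y hy =>
    exact AddSubmonoid.subset_closure (Set.mem_union_right _ ⟨y, hy, rfl⟩)
  | zero => simpa using h0S G
  | add a b _ _ iha ihb =>
    have : G.p * (a + b) = G.p * a + G.p * b := by ring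
    rw [this]
    exact AddSubmonoid.add_mem _ iha ihb

lemma rep_exists {u : ℕ} (hu : u ∈ G.S) :
    ∃ a ∈ G.S₁, ∃ b ∈ G.S₂, u = G.q * a + G.p * b := by
  induction hu using AddSubmonoid.closure_induction with
  | mem y hy =>
    rcases hy with ⟨x, hx, rfl⟩ | ⟨x, hx, rfl⟩
    · exact ⟨x, AddSubmonoid.subset_closure hx, 0, AddSubmonoid.zero_mem _, by ring⟩
    · exact ⟨0, AddSubmonoid.zero_mem _, x, AddSubmonoid.subset_closure hx, by ring⟩
  | zero => exact ⟨0, AddSubmonoid.zero_mem _, 0, AddSubmonoid.zero_mem _, by ring⟩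
  | add a b _ _ iha ihb =>
    obtain ⟨a1, ha1, b1, hb1, rfl⟩ := iha
    obtain ⟨a2, ha2, b2, hb2, rfl⟩ := ihb
    exact ⟨a1 + a2, AddSubmonoid.add_mem _ ha1 ha2, b1 + b2,
      AddSubmonoid.add_mem _ hb1 hb2, by ring⟩

end Aux2

namespace Aux2
open Aux
variable (G : Gluing)

lemma map_nM₁ {a t : ℕ} (ha : a ∈ nM G.S₁ t) : G.q * a ∈ nM G.S t := by
  induction t generalizing a with
  | zero => exact q_mul_mem G ha
  | succ t ih =>
    rcases mem_nM_succ.1 ha with ⟨c, hc, hc0, b, hb, rfl⟩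
    refine mem_nM_succ.2 ⟨G.q * c, q_mul_mem G hc, ?_, G.q * b, ih hb, by ring⟩
    have := hq_pos G
    positivity

lemma map_nM₂ {b t : ℕ} (hb : b ∈ nM G.S₂ t) : G.p * b ∈ nM G.S t := by
  induction t generalizing b with
  | zero => exact p_mul_mem G hb
  | succ t ih =>
    rcases mem_nM_succ.1 hb with ⟨c, hc, hc0, d, hd, rfl⟩
    refine mem_nM_succ.2 ⟨G.p * c, p_mul_mem G hc, ?_, G.p * d, ih hd, by ring⟩
    have := hp_pos G
    positivity

lemma ord_ge_rep {a b : ℕ} (ha : a ∈ G.S₁) (hb : b ∈ G.S₂) :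
    ordS G.S₁ a + ordS G.S₂ b ≤ ordS G.S (G.q * a + G.p * b) :=
  le_ordS (add_mem_nM (haddS G) (map_nM₁ G (mem_nM_ordS ha)) (map_nM₂ G (mem_nM_ordS hb)))

lemma rep_of_mem_nM {u t : ℕ} (hu : u ∈ nM G.S t) :
    ∃ a ∈ G.S₁, ∃ b ∈ G.S₂, u = G.q * a + G.p * b ∧
      t ≤ ordS G.S₁ a + ordS G.S₂ b := by
  induction t generalizing u with
  | zero =>
    obtain ⟨a, ha, b, hb, rfl⟩ := rep_exists G hu
    exact ⟨a, ha, b, hb, rfl, by omega⟩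
  | succ t ih =>
    rcases mem_nM_succ.1 hu with ⟨g, hg, hg0, u', hu', rfl⟩
    obtain ⟨a0, ha0, b0, hb0, hgeq⟩ := rep_exists G hg
    obtain ⟨a', ha', b', hb', hueq, hord⟩ := ih hu'
    have hone : 1 ≤ ordS G.S₁ a0 + ordS G.S₂ b0 := by
      rcases Nat.eq_zero_or_pos a0 with rfl | hpos
      · have hb0ne : b0 ≠ 0 := by
          intro h
          subst h
          simp at hgeq
          omega
        have := ordS_pos (h0₂ G) hb0 hb0ne
        omega
      · have ha0ne : a0 ≠ 0 := by omega
        have := ordS_pos (h0₁ G) ha0 ha0ne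
        omega
    refine ⟨a0 + a', hadd₁ G _ ha0 _ ha', b0 + b', hadd₂ G _ hb0 _ hb',
      by rw [hgeq, hueq]; ring, ?_⟩
    have h1 := ordS_superadd (hadd₁ G) ha0 ha'
    have h2 := ordS_superadd (hadd₂ G) hb0 hb'
    omega

/-- two representations lie on the same line; if `z₂` is "Apéry" then any other
representation sits above it. -/
lemma line_lemma {z₁ z₂ a' b' : ℕ} (hz₂ : z₂ ∈ G.S₂) (hb' : b' ∈ G.S₂)
    (hap : ∀ c ∈ G.S₂, c + G.q ≠ z₂)
    (heq : G.q * z₁ + G.p * z₂ = G.q * a' + G.p * b') :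
    ∃ s : ℕ, b' = z₂ + G.q * s ∧ z₁ = a' + G.p * s := by
  have hqpos := hq_pos G
  have hppos := hp_pos G
  -- work over ℤ
  have hZ : (G.q : ℤ) * z₁ + G.p * z₂ = G.q * a' + G.p * b' := by exact_mod_cast heq
  have hcop : IsCoprime (G.q : ℤ) (G.p : ℤ) := by
    rw [Int.isCoprime_iff_gcd_eq_one]
    simpa [Int.gcd_natCast_natCast, Nat.gcd_comm] using G.hpq
  have hdvd : (G.q : ℤ) ∣ (G.p : ℤ) * ((b' : ℤ) - z₂) := by
    have : (G.p : ℤ) * ((b' : ℤ) - z₂) = G.q * (z₁ - a') := by ring_nf; linarith [hZ]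
    exact this ▸ Dvd.intro _ rfl
  have hdvd2 : (G.q : ℤ) ∣ ((b' : ℤ) - z₂) := hcop.dvd_of_dvd_mul_left hdvd
  obtain ⟨k, hk⟩ := hdvd2
  have hknonneg : 0 ≤ k := by
    by_contra hneg
    push_neg at hneg
    -- then z₂ = b' + q * (-k), contradiction with hap
    set j : ℕ := (-k).toNat - 1 with hj
    have hkj : (-k).toNat = j + 1 := by omega
    have hz2eq : z₂ = b' + G.q * (j + 1) := by
      have h1 : (z₂ : ℤ) = b' + G.q * ((-k).toNat) := by
        have h2 : ((-k).toNat : ℤ) = -k := Int.toNat_of_nonneg (by omega)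
        rw [h2]
        linarith [hk]
      have := hkj ▸ h1
      exact_mod_cast this
    have hc : b' + G.q * j ∈ G.S₂ := by
      have : G.q * j ∈ G.S₂ := by
        have := mul_mem_of_mem (hadd₂ G) G.hq (h0₂ G) j
        rwa [Nat.mul_comm] at this
      exact hadd₂ G _ hb' _ this
    have hqj : G.q * (j + 1) = G.q * j + G.q := by ring
    exact hap _ hc (by omega)
  refine ⟨k.toNat, ?_, ?_⟩
  · have h1 : (b' : ℤ) = z₂ + G.q * k.toNat := by
      rw [Int.toNat_of_nonneg hknonneg]
      linarith [hk]
    exact_mod_cast h1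
  · have h1 : (b' : ℤ) = z₂ + G.q * k.toNat := by
      rw [Int.toNat_of_nonneg hknonneg]
      linarith [hk]
    have h2 : (G.q : ℤ) * z₁ = G.q * (a' + G.p * k.toNat) := by
      have := hZ
      rw [h1] at this
      ring_nf at this ⊢
      linarith
    have h3 : (z₁ : ℤ) = a' + G.p * k.toNat := by
      have hq0 : (G.q : ℤ) ≠ 0 := by exact_mod_cast hqpos.ne'
      exact mul_left_cancel₀ hq0 h2
    exact_mod_cast h3

/-- key: the order of a represented element whose `S₂`-part is Apéry w.r.t. `q`. -/
lemma ord_rep (hG : G.Specific) {z₁ z₂ : ℕ} (hz₁ : z₁ ∈ G.S₁) (hz₂ : z₂ ∈ G.S₂)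
    (hap : ∀ c ∈ G.S₂, c + G.q ≠ z₂) :
    ordS G.S (G.q * z₁ + G.p * z₂) = ordS G.S₁ z₁ + ordS G.S₂ z₂ := by
  refine le_antisymm ?_ (ord_ge_rep G hz₁ hz₂)
  set u := G.q * z₁ + G.p * z₂ with hu
  have huS : u ∈ G.S := AddSubmonoid.add_mem _ (q_mul_mem G hz₁) (p_mul_mem G hz₂)
  have humem : u ∈ nM G.S (ordS G.S u) := mem_nM_ordS huS
  obtain ⟨a', ha', b', hb', hueq, hord⟩ := rep_of_mem_nM G humem
  obtain ⟨s, hb's, hz₁s⟩ := line_lemma G hz₂ hb' hap (by rw [← hu]; exact hueq)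
  -- ord₂ b' ≤ ord₂ z₂ + s * (ord₂ q + l_q)
  have h1 : ordS G.S₂ b' ≤ ordS G.S₂ z₂ + s * (ordS G.S₂ G.q + lS G.S₂ G.q) := by
    have := ord_add_mul_le (hadd₂ G) (h0₂ G) (hfin₂ G) G.hq z₂ hz₂ s
    rwa [← hb's] at this
  -- ord₁ a' + s * ord₁ p ≤ ord₁ z₁
  have ha'S : a' ∈ G.S₁ := ha'
  have h2 : ordS G.S₁ a' + s * ordS G.S₁ G.p ≤ ordS G.S₁ z₁ := by
    have h := ordS_add_nsmul (hadd₁ G) (h0₁ G) ha'S G.hp s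
    rw [Nat.mul_comm s G.p, ← hz₁s] at h
    exact h
  have h3 : s * (ordS G.S₂ G.q + lS G.S₂ G.q) ≤ s * ordS G.S₁ G.p :=
    Nat.mul_le_mul_left s hG
  omega

/-- descend to an Apéry representative. -/
lemma top_rep {b : ℕ} (hb : b ∈ G.S₂) :
    ∃ z₂ ∈ G.S₂, (∀ c ∈ G.S₂, c + G.q ≠ z₂) ∧ ∃ T, b = z₂ + G.q * T := by
  have hqpos := hq_pos G
  set A := {t : ℕ | ∃ c ∈ G.S₂, b = c + G.q * t} with hA
  have hne : A.Nonempty := ⟨0, b, hb, by simp⟩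
  have hbdd : BddAbove A := by
    refine ⟨b, ?_⟩
    rintro t ⟨c, hc, hceq⟩
    nlinarith
  set T := sSup A with hT
  obtain ⟨z₂, hz₂, hz₂eq⟩ : T ∈ A := Nat.sSup_mem hne hbdd
  refine ⟨z₂, hz₂, ?_, T, hz₂eq⟩
  rintro c hc hceq
  have : T + 1 ∈ A := ⟨c, hc, by rw [hz₂eq, ← hceq]; ring⟩
  have := le_csSup hbdd this
  omega

end Aux2


/-- for a specific gluing `S` of `S₁` and `S₂`, if
`ord_S(u + qw) > ord_S(u) + ord_S(qw)` for some `u ∈ S` and `w ∈ S₁`, then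
`u = qz₁ + pz₂` for some `z₁ ∈ S₁`, `z₂ ∈ S₂` with
`ord_S(u) = ord_{S₁}(z₁) + ord_{S₂}(z₂)` and
`ord_{S₁}(z₁ + w) > ord_{S₁}(z₁) + ord_{S₁}(w)`. -/
theorem stmt14 (G : Gluing) (hG : G.Specific) (u w : ℕ) (hu : u ∈ G.S) (hw : w ∈ G.S₁)
    (h : ordS G.S u + ordS G.S (G.q * w) < ordS G.S (u + G.q * w)) :
    ∃ z₁ ∈ G.S₁, ∃ z₂ ∈ G.S₂,
      u = G.q * z₁ + G.p * z₂ ∧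
      ordS G.S u = ordS G.S₁ z₁ + ordS G.S₂ z₂ ∧
      ordS G.S₁ z₁ + ordS G.S₁ w < ordS G.S₁ (z₁ + w) := by
  obtain ⟨a, ha, b, hb, hueq⟩ := Aux2.rep_exists G hu
  obtain ⟨z₂, hz₂, hap, T, hbT⟩ := Aux2.top_rep G hb
  have hpT : G.p * T ∈ G.S₁ := by
    have := Aux.mul_mem_of_mem (Aux2.hadd₁ G) G.hp (Aux2.h0₁ G) T
    rwa [Nat.mul_comm] at this
  set z₁ := a + G.p * T with hz₁def
  have hz₁ : z₁ ∈ G.S₁ := Aux2.hadd₁ G _ ha _ hpT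
  have hurep : u = G.q * z₁ + G.p * z₂ := by
    rw [hueq, hbT, hz₁def]
    ring
  have hord_u : ordS G.S u = ordS G.S₁ z₁ + ordS G.S₂ z₂ := by
    rw [hurep]
    exact Aux2.ord_rep G hG hz₁ hz₂ hap
  have hz₁w : z₁ + w ∈ G.S₁ := Aux2.hadd₁ G _ hz₁ _ hw
  have hord_uw : ordS G.S (u + G.q * w) = ordS G.S₁ (z₁ + w) + ordS G.S₂ z₂ := by
    have hrep2 : u + G.q * w = G.q * (z₁ + w) + G.p * z₂ := by
      rw [hurep]
      ring
    rw [hrep2]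
    exact Aux2.ord_rep G hG hz₁w hz₂ hap
  have hqw : ordS G.S₁ w ≤ ordS G.S (G.q * w) :=
    Aux.le_ordS (Aux2.map_nM₁ G (Aux.mem_nM_ordS hw))
  exact ⟨z₁, hz₁, z₂, hz₂, hurep, hord_u, by omega⟩
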